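/- Let R be a commutative ring, let 𝓜 be a class of R-modules, and suppose there is a set S of R-modules with S ⊆ 𝓜 such that every M ∈ 𝓜 is a transfinite extension of modules in S (i.e., M admits an ordinal-indexed increasing continuous filtration by submodules starting at 0 and ending at M whose successive quotients are isomorphic to modules in S). Set M' = ⊕_{N ∈ S} N. Then for any ℤ-indexed chain complex X of injective R-modules: the complex Hom_R(M, X) is exact for every M ∈ 𝓜 if and only if the complex Hom_R(M', X) is exact. -/

import Mathlib

open CategoryTheory

universe w u

/-- The chain complex of abelian groups `Hom_R(M, X)` induced by a chain complex `X`. -/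
noncomputable def homFromComplex (R : Type u) [CommRing R] (M : ModuleCat.{u} R)
    (X : ChainComplex (ModuleCat.{u} R) ℤ) : ChainComplex AddCommGrpCat.{u} ℤ :=
  ((preadditiveCoyoneda.obj (Opposite.op M)).mapHomologicalComplex _).obj X

/-- A complex is exact if its homology vanishes in every degree. -/
def ComplexExact {V : Type*} [Category V] [Limits.HasZeroMorphisms V] {ι : Type*}
    {c : ComplexShape ι} (X : HomologicalComplex V c) : Prop :=
  ∀ n, X.ExactAt n

/-- `M` is a transfinite extension of modules in the family `S`: there is an ordinal-indexed
increasing continuous filtration of `M` by submodules, starting at `0` and ending at `M`,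
whose successive quotients are isomorphic to modules in `S`. -/
def IsTransfiniteExtensionOf (R : Type u) [CommRing R] {ι : Type u}
    (S : ι → ModuleCat.{u} R) (M : ModuleCat.{u} R) : Prop :=
  ∃ (lam : Ordinal.{u}) (F : Ordinal.{u} → Submodule R M),
    F 0 = ⊥ ∧ F lam = ⊤ ∧
    (∀ α β : Ordinal.{u}, α ≤ β → β ≤ lam → F α ≤ F β) ∧
    (∀ β : Ordinal.{u}, β ≤ lam → Order.IsSuccLimit β →
      F β = ⨆ (α : Ordinal.{u}) (_ : α < β), F α) ∧
    (∀ α : Ordinal.{u}, α < lam → ∃ i : ι, Nonempty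
      ((↥(F (α + 1)) ⧸ Submodule.comap (F (α + 1)).subtype (F α)) ≃ₗ[R] S i))

section Auxiliary

variable {R : Type u} [CommRing R]


/-- Abstract Zorn/Eklof lemma: lifting along a transfinite filtration. -/
structure PartialLift {M B : Type u}
    [AddCommGroup M] [Module R M] [AddCommGroup B] [Module R B]
    (lam : Ordinal.{u}) (F : Ordinal.{u} → Submodule R M)
    (P : (M →ₗ.[R] B) → Prop) where
  a : Ordinal.{u}
  ha : a ≤ lam
  g : M →ₗ.[R] B
  hdom : g.domain = F a
  hg : P g

instance PartialLift.instPreorder {M B : Type u}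
    [AddCommGroup M] [Module R M] [AddCommGroup B] [Module R B]
    {lam : Ordinal.{u}} {F : Ordinal.{u} → Submodule R M}
    {P : (M →ₗ.[R] B) → Prop} : Preorder (PartialLift lam F P) where
  le p q := p.a ≤ q.a ∧ p.g ≤ q.g
  le_refl p := ⟨le_refl _, le_refl _⟩
  le_trans p q r hpq hqr := ⟨hpq.1.trans hqr.1, hpq.2.trans hqr.2⟩

theorem exists_lift_of_filtration {M A B C : Type u}
    [AddCommGroup M] [Module R M] [AddCommGroup A] [Module R A]
    [AddCommGroup B] [Module R B] [AddCommGroup C] [Module R C]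
    (lam : Ordinal.{u}) (F : Ordinal.{u} → Submodule R M)
    (hbot : F 0 = ⊥) (htop : F lam = ⊤)
    (hmono : ∀ α β : Ordinal.{u}, α ≤ β → β ≤ lam → F α ≤ F β)
    (hcont : ∀ β : Ordinal.{u}, β ≤ lam → Order.IsSuccLimit β →
      F β = ⨆ (α : Ordinal.{u}) (_ : α < β), F α)
    (d : B →ₗ[R] A) (d0 : A →ₗ[R] C) (hdd : ∀ b, d0 (d b) = 0)
    (f : M →ₗ[R] A) (hf : ∀ x, d0 (f x) = 0)
    (hext : ∀ (p q : Submodule R M) (hpq : p ≤ q) (g : ↥p →ₗ[R] B),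
      ∃ g' : ↥q →ₗ[R] B, ∀ x : ↥p, g' (Submodule.inclusion hpq x) = g x)
    (hstep : ∀ α : Ordinal.{u}, α < lam →
      ∀ δ : (↥(F (α+1)) ⧸ Submodule.comap (F (α+1)).subtype (F α)) →ₗ[R] A,
      (∀ y, d0 (δ y) = 0) →
      ∃ k : (↥(F (α+1)) ⧸ Submodule.comap (F (α+1)).subtype (F α)) →ₗ[R] B,
        ∀ y, d (k y) = δ y) :
    ∃ g : M →ₗ[R] B, ∀ x, d (g x) = f x := by
  classical
  set P : (M →ₗ.[R] B) → Prop := fun g => ∀ x : g.domain, d (g x) = f x.val with hP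
  -- Zorn's lemma
  have hchain : ∀ c : Set (PartialLift (R := R) lam F P),
      IsChain (· ≤ ·) c → BddAbove c := by
    intro c hc
    rcases c.eq_empty_or_nonempty with rfl | ⟨p0, hp0⟩
    · refine ⟨⟨0, (zero_le : (0:Ordinal) ≤ lam), ⟨F 0, 0⟩, rfl, ?_⟩, by simp [upperBounds]⟩
      intro x
      have hx : (x : M) ∈ (⊥ : Submodule R M) := by rw [← hbot]; exact x.2
      rw [Submodule.mem_bot] at hx
      simp [LinearPMap.mk_apply, hx]
    · have hbddA : BddAbove (PartialLift.a '' c) :=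
        ⟨lam, by rintro _ ⟨p, hp, rfl⟩; exact p.ha⟩
      have hneA : (PartialLift.a '' c).Nonempty := ⟨p0.a, ⟨p0, hp0, rfl⟩⟩
      set β := sSup (PartialLift.a '' c) with hβdef
      have hβ : β ≤ lam := csSup_le hneA (by rintro _ ⟨p, hp, rfl⟩; exact p.ha)
      by_cases hmem : β ∈ PartialLift.a '' c
      · obtain ⟨p, hpc, hpa⟩ := hmem
        refine ⟨p, fun q hq => ?_⟩
        have hqa : q.a ≤ p.a := hpa ▸ le_csSup hbddA ⟨q, hq, rfl⟩
        rcases eq_or_ne q p with rfl | hne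
        · exact le_refl q
        rcases hc hq hpc hne with hle | hle
        · exact hle
        · -- p ≤ q, but q.a ≤ p.a : reverse the pmap inequality
          refine ⟨hqa, ?_, ?_⟩
          · rw [q.hdom, p.hdom]; exact hmono _ _ hqa p.ha
          · intro x y hxy
            exact (hle.2.2 (x := y) (y := x) hxy.symm).symm
      · -- limit case
        have hβ0 : β ≠ 0 := by
          intro h0
          exact hmem ⟨p0, hp0, le_antisymm (le_csSup hbddA ⟨p0, hp0, rfl⟩) (h0 ▸ zero_le)⟩
        have hlim : Order.IsSuccLimit β := by
          refine Ordinal.isSuccLimit_iff.2 ⟨hβ0, Order.isSuccPrelimit_of_succ_lt fun γ hγ => lt_of_le_of_ne (Order.succ_le_of_lt hγ) fun he => ?_⟩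
          obtain ⟨_, ⟨p, hp, rfl⟩, hlt⟩ := exists_lt_of_lt_csSup hneA hγ
          have : p.a = β := le_antisymm (le_csSup hbddA ⟨p, hp, rfl⟩)
            (he ▸ Order.succ_le_of_lt hlt)
          exact hmem ⟨p, hp, this⟩
        have hdir : DirectedOn (· ≤ ·) (PartialLift.g '' c) := by
          rintro _ ⟨p, hp, rfl⟩ _ ⟨q, hq, rfl⟩
          rcases eq_or_ne p q with rfl | hne
          · exact ⟨p.g, ⟨p, hp, rfl⟩, le_refl _, le_refl _⟩
          rcases hc hp hq hne with hle | hle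
          · exact ⟨q.g, ⟨q, hq, rfl⟩, hle.2, le_refl _⟩
          · exact ⟨p.g, ⟨p, hp, rfl⟩, le_refl _, hle.2⟩
        set h := LinearPMap.sSup (PartialLift.g '' c) hdir with hh
        have hdomh : h.domain = F β := by
          have h1 : h.domain = sSup (LinearPMap.domain '' (PartialLift.g '' c)) := rfl
          have h2 : LinearPMap.domain '' (PartialLift.g '' c) = (fun p => F p.a) '' c := by
            rw [Set.image_image]
            exact Set.image_congr fun p _ => p.hdom
          rw [h1, h2]
          apply le_antisymm
          · apply sSup_le
            rintro _ ⟨p, hp, rfl⟩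
            exact hmono _ _ (le_csSup hbddA ⟨p, hp, rfl⟩) hβ
          · rw [hcont β hβ hlim]
            apply iSup₂_le
            intro α hα
            obtain ⟨_, ⟨p, hp, rfl⟩, hlt⟩ := exists_lt_of_lt_csSup hneA hα
            exact le_trans (hmono _ _ hlt.le p.ha) (le_sSup ⟨p, hp, rfl⟩)
        have hgh : P h := by
          intro x
          have hx : (x : M) ∈ sSup (LinearPMap.domain '' (PartialLift.g '' c)) := x.2
          have hne2 : (LinearPMap.domain '' (PartialLift.g '' c)).Nonempty :=
            ⟨p0.g.domain, ⟨p0.g, ⟨p0, hp0, rfl⟩, rfl⟩⟩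
          have hdir2 : DirectedOn (· ≤ ·) (LinearPMap.domain '' (PartialLift.g '' c)) :=
            directedOn_image.2 (hdir.mono fun a b hab => hab.1)
          obtain ⟨_, ⟨_, ⟨p, hp, rfl⟩, rfl⟩, hxp⟩ :=
            (Submodule.mem_sSup_of_directed hne2 hdir2).1 hx
          have happ := LinearPMap.sSup_apply hdir (Set.mem_image_of_mem _ hp)
            (⟨(x : M), hxp⟩ : p.g.domain)
          have hxeq : x = ⟨(x : M), (LinearPMap.le_sSup hdir
              (Set.mem_image_of_mem _ hp)).1 hxp⟩ := Subtype.ext rfl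
          rw [hxeq, happ]
          exact p.hg ⟨(x : M), hxp⟩
        refine ⟨⟨β, hβ, h, hdomh, hgh⟩, fun q hq => ?_⟩
        exact ⟨le_csSup hbddA ⟨q, hq, rfl⟩,
          LinearPMap.le_sSup hdir (Set.mem_image_of_mem _ hq)⟩
  obtain ⟨m, hm⟩ := zorn_le hchain
  -- the maximal element has a = lam
  have hma : m.a = lam := by
    by_contra hne
    have hmalt : m.a < lam := lt_of_le_of_ne m.ha hne
    have hsle : m.a + 1 ≤ lam := by
      rw [Ordinal.add_one_eq_succ]; exact Order.succ_le_of_lt hmalt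
    have hFle : F m.a ≤ F (m.a + 1) :=
      hmono _ _ (le_add_of_nonneg_right (zero_le : (0:Ordinal) ≤ 1)) hsle
    have hincl : m.g.domain ≤ F (m.a + 1) := by rw [m.hdom]; exact hFle
    obtain ⟨ghat, hghat⟩ := hext m.g.domain (F (m.a + 1)) hincl m.g.toFun
    set N := Submodule.comap (F (m.a + 1)).subtype (F m.a) with hN
    set δ : ↥(F (m.a + 1)) →ₗ[R] A :=
      f ∘ₗ (F (m.a + 1)).subtype - d ∘ₗ ghat with hδ
    have hδ0 : ∀ y : ↥(F (m.a + 1)), (y : M) ∈ F m.a → δ y = 0 := by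
      intro y hy
      set x : m.g.domain := ⟨(y : M), by rw [m.hdom]; exact hy⟩ with hx
      have h1 : Submodule.inclusion hincl x = y := Subtype.ext rfl
      have h2 : ghat y = m.g x := by rw [← h1, hghat]; rfl
      have h3 : d (m.g x) = f (x : M) := m.hg x
      simp only [hδ, LinearMap.sub_apply, LinearMap.comp_apply, Submodule.subtype_apply]
      rw [h2, h3]
      exact sub_self _
    have hNker : N ≤ LinearMap.ker δ := fun y hy => hδ0 y hy
    set δ' := N.liftQ δ hNker with hδ'
    have hδ'cyc : ∀ z, d0 (δ' z) = 0 := by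
      intro z
      obtain ⟨y, rfl⟩ := Submodule.Quotient.mk_surjective N z
      rw [hδ', Submodule.liftQ_apply]
      simp only [hδ, LinearMap.sub_apply, LinearMap.comp_apply, Submodule.subtype_apply, map_sub]
      rw [hf, hdd]
      exact sub_self 0
    obtain ⟨k', hk'⟩ := hstep m.a hmalt δ' hδ'cyc
    set gnew : ↥(F (m.a + 1)) →ₗ[R] B := ghat + k' ∘ₗ N.mkQ with hgnew
    have hgnewP : P (⟨F (m.a + 1), gnew⟩ : M →ₗ.[R] B) := by
      intro x
      rw [LinearPMap.mk_apply]
      simp only [hgnew, LinearMap.add_apply, LinearMap.comp_apply, map_add]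
      rw [hk', hδ', Submodule.mkQ_apply, Submodule.liftQ_apply]
      simp only [hδ, LinearMap.sub_apply, LinearMap.comp_apply, Submodule.subtype_apply]
      abel
    set p' : PartialLift (R := R) lam F P := ⟨m.a + 1, hsle, ⟨F (m.a + 1), gnew⟩, rfl, hgnewP⟩
      with hp'
    have hmp' : m ≤ p' := by
      refine ⟨le_add_of_nonneg_right (zero_le : (0:Ordinal) ≤ 1), hincl, ?_⟩
      intro x y hxy
      have hy : (y : M) ∈ F m.a := by
        have hxm : (x : M) ∈ F m.a := by rw [← m.hdom]; exact x.2
        rwa [hxy] at hxm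
      have hyN : (y : ↥(F (m.a+1))) ∈ N := hy
      show m.g x = gnew y
      have hzero : k' (N.mkQ y) = 0 := by
        rw [Submodule.mkQ_apply, (Submodule.Quotient.mk_eq_zero N).2 hyN, map_zero]
      have h1 : Submodule.inclusion hincl x = y := Subtype.ext hxy
      simp only [hgnew, LinearMap.add_apply, LinearMap.comp_apply]
      rw [hzero, add_zero, ← h1, hghat]
      rfl
    have := hm hmp'
    have h2 : m.a + 1 ≤ m.a := this.1
    rw [Ordinal.add_one_eq_succ] at h2
    exact absurd h2 (Order.succ_le_iff.not.2 (lt_irrefl _))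
  -- conclude
  have htop' : m.g.domain = ⊤ := by rw [m.hdom, hma, htop]
  refine ⟨m.g.toFun ∘ₗ ((LinearEquiv.ofTop m.g.domain htop').symm : M ≃ₗ[R] m.g.domain).toLinearMap,
    fun x => ?_⟩
  have := m.hg ((LinearEquiv.ofTop m.g.domain htop').symm x)
  simp only [LinearMap.comp_apply, LinearEquiv.coe_coe]
  rw [show m.g.toFun ((LinearEquiv.ofTop m.g.domain htop').symm x)
      = m.g ((LinearEquiv.ofTop m.g.domain htop').symm x) from rfl, this,
    LinearEquiv.coe_ofTop_symm_apply]


variable (X : ChainComplex (ModuleCat.{u} R) ℤ)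

/-- The concrete lifting property equivalent to exactness of `Hom_R(A, X)`. -/
def LiftP (A : Type u) [AddCommGroup A] [Module R A] : Prop :=
  ∀ (n : ℤ) (f : A →ₗ[R] X.X n), (∀ x, X.d n (n-1) (f x) = 0) →
    ∃ g : A →ₗ[R] X.X (n+1), ∀ x, X.d (n+1) n (g x) = f x

theorem complexExact_iff_liftP (M : ModuleCat.{u} R) :
    ComplexExact (homFromComplex R M X) ↔ LiftP X M := by
  unfold ComplexExact LiftP
  have key : ∀ n : ℤ, (homFromComplex R M X).ExactAt n ↔
      ∀ (f : M →ₗ[R] X.X n), (∀ x, X.d n (n-1) (f x) = 0) →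
        ∃ g : M →ₗ[R] X.X (n+1), ∀ x, X.d (n+1) n (g x) = f x := by
    intro n
    rw [HomologicalComplex.exactAt_iff' _ (n+1) n (n-1) (by simp) (by simp),
      ShortComplex.ab_exact_iff]
    constructor
    · intro h f hf
      obtain ⟨g, hg⟩ := h (ModuleCat.ofHom f) (by exact ModuleCat.hom_ext (LinearMap.ext fun x => hf x))
      exact ⟨g.hom, fun x => congrArg (fun (φ : M ⟶ X.X n) => φ.hom x) hg⟩
    · intro h f hf
      obtain ⟨g, hg⟩ := h f.hom (fun x => congrArg (fun (φ : M ⟶ X.X (n-1)) => φ.hom x) hf)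
      exact ⟨ModuleCat.ofHom g, ModuleCat.hom_ext (LinearMap.ext fun x => hg x)⟩
  exact forall_congr' key

theorem liftP_directSum {ι : Type u} (S : ι → ModuleCat.{u} R) :
    LiftP X (DirectSum ι fun i => S i) ↔ ∀ i, LiftP X (S i) := by
  classical
  constructor
  · intro h i n f hf
    obtain ⟨g, hg⟩ := h n (f ∘ₗ DirectSum.component R ι (fun i => ↥(S i)) i)
      (fun x => hf _)
    refine ⟨g ∘ₗ DirectSum.lof R ι (fun i => ↥(S i)) i, fun x => ?_⟩
    have := hg (DirectSum.lof R ι (fun i => ↥(S i)) i x)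
    simpa [DirectSum.component.lof_self] using this
  · intro h n f hf
    choose g hg using fun i => h i n (f ∘ₗ DirectSum.lof R ι (fun i => ↥(S i)) i)
      (fun x => hf _)
    refine ⟨DirectSum.toModule R ι _ g, fun x => ?_⟩
    induction x using DirectSum.induction_on with
    | zero => simp
    | of i y =>
      rw [← DirectSum.lof_eq_of R, DirectSum.toModule_lof]
      exact hg i y
    | add a b ha hb => rw [map_add, map_add, map_add, ha, hb]

theorem liftP_of_transfinite {ι : Type u} (S : ι → ModuleCat.{u} R)
    (hX : ∀ n, Injective (X.X n)) (hlift : ∀ i, LiftP X (S i))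
    (M : ModuleCat.{u} R) (hM : IsTransfiniteExtensionOf R S M) : LiftP X M := by
  obtain ⟨lam, F, hbot, htop, hmono, hcont, hquot⟩ := hM
  intro n f hf
  have hdd : ∀ b : ↥(X.X (n+1)), (X.d n (n-1)) ((X.d (n+1) n) b) = 0 := by
    intro b
    rw [← ConcreteCategory.comp_apply, X.d_comp_d]; rfl
  have hext : ∀ (p q : Submodule R M) (hpq : p ≤ q) (g : ↥p →ₗ[R] ↥(X.X (n+1))),
      ∃ g' : ↥q →ₗ[R] ↥(X.X (n+1)), ∀ x : ↥p, g' (Submodule.inclusion hpq x) = g x := by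
    intro p q hpq g
    haveI := hX (n+1)
    let incl : ModuleCat.of R ↥p ⟶ ModuleCat.of R ↥q :=
      ModuleCat.ofHom (Submodule.inclusion hpq)
    haveI : Mono incl := (ModuleCat.mono_iff_injective incl).2
      (Submodule.inclusion_injective hpq)
    refine ⟨(Injective.factorThru (ModuleCat.ofHom g : ModuleCat.of R ↥p ⟶ X.X (n+1)) incl).hom, fun x => ?_⟩
    exact congrArg (fun φ => ModuleCat.Hom.hom φ x) (Injective.comp_factorThru (ModuleCat.ofHom g : ModuleCat.of R ↥p ⟶ X.X (n+1)) incl)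
  have hstep : ∀ α : Ordinal.{u}, α < lam →
      ∀ δ : (↥(F (α+1)) ⧸ Submodule.comap (F (α+1)).subtype (F α)) →ₗ[R] ↥(X.X n),
      (∀ y, (X.d n (n-1)) (δ y) = 0) →
      ∃ k : (↥(F (α+1)) ⧸ Submodule.comap (F (α+1)).subtype (F α)) →ₗ[R] ↥(X.X (n+1)),
        ∀ y, (X.d (n+1) n) (k y) = δ y := by
    intro α hα δ hδ
    obtain ⟨i, ⟨e⟩⟩ := hquot α hα
    obtain ⟨k0, hk0⟩ := hlift i n (δ ∘ₗ (e.symm : S i ≃ₗ[R] _).toLinearMap)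
      (fun x => hδ _)
    refine ⟨k0 ∘ₗ (e : _ ≃ₗ[R] S i).toLinearMap, fun y => ?_⟩
    have := hk0 (e y)
    simpa using this
  obtain ⟨g, hg⟩ := exists_lift_of_filtration lam F hbot htop hmono hcont
    (X.d (n+1) n).hom (X.d n (n-1)).hom hdd f hf hext hstep
  exact ⟨g, hg⟩

end Auxiliary

/-- Let `𝓜` be a class of `R`-modules and `S` a set of modules in `𝓜` such that every module
in `𝓜` is a transfinite extension of modules in `S`; let `M'` be the direct sum of the modules
in `S`. Then for any chain complex `X` of injective `R`-modules, `Hom_R(M, X)` is exact for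
every `M ∈ 𝓜` if and only if `Hom_R(M', X)` is exact. -/
theorem homFromComplex_exact_iff_of_transfinite_extensions
    (R : Type u) [CommRing R] (Mc : ModuleCat.{u} R → Prop)
    (ι : Type u) (S : ι → ModuleCat.{u} R) (hS : ∀ i, Mc (S i))
    (hfilt : ∀ M : ModuleCat.{u} R, Mc M → IsTransfiniteExtensionOf R S M)
    (X : ChainComplex (ModuleCat.{u} R) ℤ) (hX : ∀ n, Injective (X.X n)) :
    (∀ M : ModuleCat.{u} R, Mc M → ComplexExact (homFromComplex R M X)) ↔
    ComplexExact (homFromComplex R (ModuleCat.of R (DirectSum ι (fun i => S i))) X) := by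
  constructor
  · intro h
    rw [complexExact_iff_liftP]
    exact (liftP_directSum X S).2
      (fun i => (complexExact_iff_liftP X (S i)).1 (h (S i) (hS i)))
  · intro h M hM
    rw [complexExact_iff_liftP]
    have hlift : ∀ i, LiftP X (S i) :=
      (liftP_directSum X S).1 ((complexExact_iff_liftP X _).1 h)
    exact liftP_of_transfinite X S hX hlift M (hfilt M hM)
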